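/- (Positivity of the solutions of the epidemic model.) Assume γ(t) ≥ 0 for all t ≥ 0, S(0) ≥ 0 and I(0) ≥ 0. Then S(t) ≥ 0, I(t) ≥ 0 and N(t) ≥ 0 for all t ≥ 0. -/

import Mathlib

open Set MeasureTheory intervalIntegral

/-- If `f` has nonnegative derivative `g` at every `t ≥ 0`, then `f 0 ≤ f t` for `t ≥ 0`. -/
lemma mono_aux {f g : ℝ → ℝ} (hf : ∀ t : ℝ, 0 ≤ t → HasDerivAt f (g t) t)
    (hg : ∀ t : ℝ, 0 ≤ t → 0 ≤ g t) : ∀ t : ℝ, 0 ≤ t → f 0 ≤ f t := by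
  intro t ht
  have hmono : MonotoneOn f (Icc (0:ℝ) t) := by
    apply monotoneOn_of_hasDerivWithinAt_nonneg (f' := g) (convex_Icc 0 t)
    · intro x hx
      exact ((hf x hx.1).continuousAt).continuousWithinAt
    · intro x hx
      rw [interior_Icc] at hx
      exact ((hf x hx.1.le).hasDerivWithinAt)
    · intro x hx
      rw [interior_Icc] at hx
      exact hg x hx.1.le
  exact hmono (left_mem_Icc.2 ht) (right_mem_Icc.2 ht) ht

lemma const_aux {f : ℝ → ℝ} (hf : ∀ t : ℝ, 0 ≤ t → HasDerivAt f 0 t) :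
    ∀ t : ℝ, 0 ≤ t → f t = f 0 := by
  intro t ht
  have h1 := mono_aux (g := fun _ => (0:ℝ)) hf (fun _ _ => le_refl 0) t ht
  have h2 := mono_aux (f := fun x => -f x) (g := fun _ => (0:ℝ))
    (fun x hx => by have h := (hf x hx).neg; rw [neg_zero] at h; exact h) (fun _ _ => le_refl 0) t ht
  simp only [neg_le_neg_iff] at h2
  linarith

theorem sis_positivity
    (r d γ β δ1 δ2 p S I : ℝ → ℝ)
    (hrc : Continuous r) (hdc : Continuous d) (hγc : Continuous γ) (hβc : Continuous β)
    (hδ1c : Continuous δ1) (hδ2c : Continuous δ2) (hpc : Continuous p)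
    (hppos : ∀ t : ℝ, 0 ≤ t → 0 < p t)
    (hS : ∀ t : ℝ, 0 ≤ t →
      HasDerivAt S (r t * (1 - (δ1 t * S t + δ2 t * I t) / p t) * S t
        + (γ t - β t * S t) * I t) t)
    (hI : ∀ t : ℝ, 0 ≤ t → HasDerivAt I ((β t * S t - d t - γ t) * I t) t)
    (hγpos : ∀ t : ℝ, 0 ≤ t → 0 ≤ γ t)
    (hS0 : 0 ≤ S 0) (hI0 : 0 ≤ I 0) :
    ∀ t : ℝ, 0 ≤ t → 0 ≤ S t ∧ 0 ≤ I t ∧ 0 ≤ S t + I t := by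
  -- continuity of S, I at nonnegative times
  have hSc : ∀ t : ℝ, 0 ≤ t → ContinuousAt S t := fun t ht => (hS t ht).continuousAt
  have hIc : ∀ t : ℝ, 0 ≤ t → ContinuousAt I t := fun t ht => (hI t ht).continuousAt
  have hmaxc : Continuous (fun t : ℝ => max t 0) := continuous_id.max continuous_const
  have hSm : Continuous (fun t : ℝ => S (max t 0)) :=
    continuous_iff_continuousAt.2 fun x =>
      show ContinuousAt (S ∘ fun t : ℝ => max t 0) x from
        ContinuousAt.comp (g := S) (f := fun t : ℝ => max t 0) (x := x)
          (hSc _ (le_max_right x 0)) hmaxc.continuousAt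
  have hIm : Continuous (fun t : ℝ => I (max t 0)) :=
    continuous_iff_continuousAt.2 fun x =>
      show ContinuousAt (I ∘ fun t : ℝ => max t 0) x from
        ContinuousAt.comp (g := I) (f := fun t : ℝ => max t 0) (x := x)
          (hIc _ (le_max_right x 0)) hmaxc.continuousAt
  have hpm : Continuous (fun t : ℝ => p (max t 0)) := hpc.comp hmaxc
  have hpmne : ∀ t : ℝ, p (max t 0) ≠ 0 := fun t => (hppos _ (le_max_right t 0)).ne'
  -- FTC helper
  have ftc : ∀ (f : ℝ → ℝ), Continuous f →
      ∀ t : ℝ, HasDerivAt (fun u => ∫ x in (0:ℝ)..u, f x) (f t) t := by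
    intro f hf t
    exact integral_hasDerivAt_right (hf.intervalIntegrable _ _)
      (hf.stronglyMeasurableAtFilter _ _) hf.continuousAt
  -- Step 1 : nonnegativity of I
  set aa : ℝ → ℝ := fun t => β t * S (max t 0) - d t - γ t with haa
  have haac : Continuous aa := ((hβc.mul hSm).sub hdc).sub hγc
  set A : ℝ → ℝ := fun u => ∫ x in (0:ℝ)..u, aa x with hAdef
  have hA : ∀ t : ℝ, HasDerivAt A (aa t) t := ftc aa haac
  set J : ℝ → ℝ := fun t => Real.exp (-A t) * I t with hJdef
  have hJ : ∀ t : ℝ, 0 ≤ t → HasDerivAt J 0 t := by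
    intro t ht
    have h1 : HasDerivAt (fun u => Real.exp (-A u)) (Real.exp (-A t) * (-aa t)) t :=
      ((hA t).neg).exp
    have h2 : HasDerivAt (fun u => Real.exp (-A u) * I u) _ t := h1.mul (hI t ht)
    have hmax : max t 0 = t := max_eq_left ht
    convert h2 using 1
    simp only [haa, hmax]
    ring
  have hJconst := const_aux hJ
  have hJ0 : J 0 = I 0 := by
    simp [hJdef, hAdef, intervalIntegral.integral_same]
  have hInonneg : ∀ t : ℝ, 0 ≤ t → 0 ≤ I t := by
    intro t ht
    have h : Real.exp (-A t) * I t = I 0 := by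
      have := hJconst t ht
      rw [hJ0] at this
      exact this
    nlinarith [Real.exp_pos (-A t), Real.exp_pos (A t)]
  -- Step 2 : nonnegativity of S
  set bb : ℝ → ℝ := fun t =>
    r t * (1 - (δ1 t * S (max t 0) + δ2 t * I (max t 0)) / p (max t 0)) - β t * I (max t 0)
    with hbb
  have hbbc : Continuous bb := by
    apply Continuous.sub
    · exact hrc.mul (continuous_const.sub
        (((hδ1c.mul hSm).add (hδ2c.mul hIm)).div hpm (fun t => hpmne t)))
    · exact hβc.mul hIm
  set B : ℝ → ℝ := fun u => ∫ x in (0:ℝ)..u, bb x with hBdef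
  have hB : ∀ t : ℝ, HasDerivAt B (bb t) t := ftc bb hbbc
  set T : ℝ → ℝ := fun t => Real.exp (-B t) * S t with hTdef
  have hT : ∀ t : ℝ, 0 ≤ t → HasDerivAt T (Real.exp (-B t) * (γ t * I t)) t := by
    intro t ht
    have h1 : HasDerivAt (fun u => Real.exp (-B u)) (Real.exp (-B t) * (-bb t)) t :=
      ((hB t).neg).exp
    have h2 : HasDerivAt (fun u => Real.exp (-B u) * S u) _ t := h1.mul (hS t ht)
    have hmax : max t 0 = t := max_eq_left ht
    convert h2 using 1
    simp only [hbb, hmax]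
    ring
  have hTnonneg : ∀ t : ℝ, 0 ≤ t → 0 ≤ Real.exp (-B t) * (γ t * I t) := by
    intro t ht
    exact mul_nonneg (Real.exp_pos _).le (mul_nonneg (hγpos t ht) (hInonneg t ht))
  have hTmono := mono_aux hT hTnonneg
  have hT0 : T 0 = S 0 := by
    simp [hTdef, hBdef, intervalIntegral.integral_same]
  have hSnonneg : ∀ t : ℝ, 0 ≤ t → 0 ≤ S t := by
    intro t ht
    have h : S 0 ≤ Real.exp (-B t) * S t := by
      have := hTmono t ht
      rw [hT0] at this
      exact this
    nlinarith [Real.exp_pos (-B t), Real.exp_pos (B t)]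
  intro t ht
  exact ⟨hSnonneg t ht, hInonneg t ht, add_nonneg (hSnonneg t ht) (hInonneg t ht)⟩
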